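/- arXiv:2007.02597 — 3 statements merged into one kernel-verified Lean document; each statement's English description precedes it below -/
import Mathlib

section
/- Velocity at the center of an axisymmetric droplet: Let r : [0,π] → (0,∞) be Lipschitz and let B = { z e(θ,φ) : θ ∈ [0,π], φ ∈ [0,2π], 0 ≤ z ≤ r(θ) } ⊂ ℝ³ be the corresponding axisymmetric body. Define u(x) = −∫_B Φ(x−y) e₃ dy. Then the first two components of u(0) vanish, and u(0) · e₃ = −(1/4) ∫₀^π r(θ)² sin θ (1 − (1/2) sin² θ) dθ; in particular u(0)·e₃ < 0. -/
/- Velocity at the center of an axisymmetric droplet: for a Lipschitz radius function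
   r : [0,π] → (0,∞) and B = { z e(θ,φ) : 0 ≤ z ≤ r(θ) }, the velocity u(0) = −∫_B Φ(0−y) e₃ dy
   has vanishing horizontal components and
   u(0)·e₃ = −(1/4) ∫₀^π r(θ)² sin θ (1 − sin²θ/2) dθ < 0. -/

noncomputable section
open MeasureTheory Real Set Filter RealInnerProductSpace

def V3 (a b c : ℝ) : EuclideanSpace ℝ (Fin 3) := (WithLp.equiv 2 (Fin 3 → ℝ)).symm ![a, b, c]

def e3 : EuclideanSpace ℝ (Fin 3) := V3 0 0 1

/-- Spherical parametrization `e(θ,φ) = (cos φ sin θ, sin φ sin θ, cos θ)`. -/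
def eSph (θ φ : ℝ) : EuclideanSpace ℝ (Fin 3) :=
  V3 (Real.cos φ * Real.sin θ) (Real.sin φ * Real.sin θ) (Real.cos θ)

/-- Oseen tensor `Φ(x) = (8π)⁻¹ (I₃/|x| + x⊗x/|x|³)` applied to a vector `v`. -/
def oseen (x v : EuclideanSpace ℝ (Fin 3)) : EuclideanSpace ℝ (Fin 3) :=
  (8 * π)⁻¹ • (‖x‖⁻¹ • v + (‖x‖ ^ 3)⁻¹ • (⟪x, v⟫ • x))

/-- The axisymmetric body `B = { z e(θ,φ) : θ ∈ [0,π], φ ∈ [0,2π], 0 ≤ z ≤ r(θ) }`. -/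
def axiBody (r : ℝ → ℝ) : Set (EuclideanSpace ℝ (Fin 3)) :=
  {x | ∃ θ ∈ Set.Icc (0:ℝ) π, ∃ φ ∈ Set.Icc (0:ℝ) (2 * π), ∃ z : ℝ,
    0 ≤ z ∧ z ≤ r θ ∧ x = z • eSph θ φ}

/-- The velocity at the origin: `u(0) = −∫_B Φ(0−y) e₃ dy`. -/
def centerVel (r : ℝ → ℝ) : EuclideanSpace ℝ (Fin 3) :=
  -∫ y in axiBody r, oseen (0 - y) e3

abbrev E3 := EuclideanSpace ℝ (Fin 3)

def Lclm : E3 ≃L[ℝ] (Fin 3 → ℝ) := PiLp.continuousLinearEquiv 2 ℝ (fun _ : Fin 3 => ℝ)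

def Gfun (q : Fin 3 → ℝ) : Fin 3 → ℝ :=
  ![Real.cos (q 1) * Real.sin (q 0) * q 2, Real.sin (q 1) * Real.sin (q 0) * q 2,
    Real.cos (q 0) * q 2]

def Fc (p : E3) : E3 := Lclm.symm (Gfun (Lclm p))

lemma Fc_coord (p : E3) :
    Fc p 0 = Real.cos (p 1) * Real.sin (p 0) * p 2 ∧
    Fc p 1 = Real.sin (p 1) * Real.sin (p 0) * p 2 ∧
    Fc p 2 = Real.cos (p 0) * p 2 := by
  refine ⟨rfl, rfl, rfl⟩

lemma Fc_eq_smul (p : E3) : Fc p = p 2 • eSph (p 0) (p 1) := by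
  ext i
  fin_cases i <;>
    simp [Fc, Gfun, Lclm, eSph, V3, PiLp.smul_apply, smul_eq_mul] <;> ring

def Mmat (p : E3) : Matrix (Fin 3) (Fin 3) ℝ :=
  !![p 2 * Real.cos (p 1) * Real.cos (p 0), -(p 2 * Real.sin (p 1) * Real.sin (p 0)),
      Real.cos (p 1) * Real.sin (p 0);
     p 2 * Real.sin (p 1) * Real.cos (p 0), p 2 * Real.cos (p 1) * Real.sin (p 0),
      Real.sin (p 1) * Real.sin (p 0);
     -(p 2 * Real.sin (p 0)), 0, Real.cos (p 0)]

def Gclm (p : E3) : (Fin 3 → ℝ) →L[ℝ] (Fin 3 → ℝ) :=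
  LinearMap.toContinuousLinearMap ((Mmat p).mulVecLin)

def Amap (p : E3) : E3 →L[ℝ] E3 :=
  ((Lclm.symm : (Fin 3 → ℝ) →L[ℝ] E3).comp (Gclm p)).comp (Lclm : E3 →L[ℝ] (Fin 3 → ℝ))

lemma det_Amap (p : E3) : (Amap p).det = p 2 ^ 2 * Real.sin (p 0) := by
  have h1 : (Amap p).det = LinearMap.det ((Mmat p).mulVecLin) := by
    have : ((Amap p : E3 →ₗ[ℝ] E3)) =
        (Lclm.symm.toLinearEquiv : (Fin 3 → ℝ) ≃ₗ[ℝ] E3) ∘ₗ ((Mmat p).mulVecLin) ∘ₗ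
          ((Lclm.symm.toLinearEquiv : (Fin 3 → ℝ) ≃ₗ[ℝ] E3).symm : E3 →ₗ[ℝ] (Fin 3 → ℝ)) := rfl
    rw [ContinuousLinearMap.det, this, LinearMap.det_conj]
  rw [h1, ← Matrix.toLin'_apply', LinearMap.det_toLin', Mmat, Matrix.det_fin_three]
  simp [Matrix.cons_val_zero, Matrix.cons_val_one]
  linear_combination (p 2 ^ 2 * Real.sin (p 0) * Real.cos (p 0) ^ 2 + p 2 ^ 2 * Real.sin (p 0) ^ 3) *
      sin_sq_add_cos_sq (p 1) + p 2 ^ 2 * Real.sin (p 0) * sin_sq_add_cos_sq (p 0)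

lemma hasFDerivAt_Gfun (p : E3) : HasFDerivAt Gfun (Gclm p) (Lclm p) := by
  rw [hasFDerivAt_pi']
  intro i
  have h0 : HasFDerivAt (fun q : Fin 3 → ℝ => q 0)
      (ContinuousLinearMap.proj (R := ℝ) (φ := fun _ : Fin 3 => ℝ) 0) (Lclm p) :=
    (ContinuousLinearMap.proj (R := ℝ) (φ := fun _ : Fin 3 => ℝ) 0).hasFDerivAt
  have h1 : HasFDerivAt (fun q : Fin 3 → ℝ => q 1)
      (ContinuousLinearMap.proj (R := ℝ) (φ := fun _ : Fin 3 => ℝ) 1) (Lclm p) :=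
    (ContinuousLinearMap.proj (R := ℝ) (φ := fun _ : Fin 3 => ℝ) 1).hasFDerivAt
  have h2 : HasFDerivAt (fun q : Fin 3 → ℝ => q 2)
      (ContinuousLinearMap.proj (R := ℝ) (φ := fun _ : Fin 3 => ℝ) 2) (Lclm p) :=
    (ContinuousLinearMap.proj (R := ℝ) (φ := fun _ : Fin 3 => ℝ) 2).hasFDerivAt
  have hc0 := (Real.hasDerivAt_cos ((Lclm p) 0)).comp_hasFDerivAt (Lclm p) h0
  have hs0 := (Real.hasDerivAt_sin ((Lclm p) 0)).comp_hasFDerivAt (Lclm p) h0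
  have hc1 := (Real.hasDerivAt_cos ((Lclm p) 1)).comp_hasFDerivAt (Lclm p) h1
  have hs1 := (Real.hasDerivAt_sin ((Lclm p) 1)).comp_hasFDerivAt (Lclm p) h1
  fin_cases i
  · convert ((hc1.mul hs0).mul h2) using 1
    · rfl
    · rfl
    ext w
    simp [Gclm, Mmat, Matrix.mulVecLin, Matrix.mulVec, dotProduct,
      Fin.sum_univ_three, Matrix.vecHead, Matrix.vecTail, Function.comp, Lclm]
    ring
  · convert ((hs1.mul hs0).mul h2) using 1
    · rfl
    · rfl
    ext w
    simp [Gclm, Mmat, Matrix.mulVecLin, Matrix.mulVec, dotProduct,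
      Fin.sum_univ_three, Matrix.vecHead, Matrix.vecTail, Function.comp, Lclm]
    ring
  · convert (hc0.mul h2) using 1
    · rfl
    · rfl
    ext w
    simp [Gclm, Mmat, Matrix.mulVecLin, Matrix.mulVec, dotProduct,
      Fin.sum_univ_three, Matrix.vecHead, Matrix.vecTail, Function.comp, Lclm]
    ring

lemma hasFDerivAt_Fc (p : E3) : HasFDerivAt Fc (Amap p) p := by
  have h1 : HasFDerivAt (⇑Lclm) (Lclm : E3 →L[ℝ] (Fin 3 → ℝ)) p := Lclm.hasFDerivAt
  have h2 : HasFDerivAt (⇑Lclm.symm) (Lclm.symm : (Fin 3 → ℝ) →L[ℝ] E3)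
      (Gfun (Lclm p)) := Lclm.symm.hasFDerivAt
  have := h2.comp p ((hasFDerivAt_Gfun p).comp p h1)
  rw [← ContinuousLinearMap.comp_assoc] at this
  exact this

def Tset (ρ : ℝ → ℝ) : Set E3 :=
  {p | p 0 ∈ Icc (0:ℝ) π ∧ p 1 ∈ Icc (0:ℝ) (2*π) ∧ p 2 ∈ Icc (0:ℝ) (ρ (p 0))}

def Sset (ρ : ℝ → ℝ) : Set E3 :=
  {p | p 0 ∈ Ioo (0:ℝ) π ∧ p 1 ∈ Ioo (0:ℝ) (2*π) ∧ p 2 ∈ Ioo (0:ℝ) (ρ (p 0))}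

lemma contCoord (i : Fin 3) : Continuous fun p : E3 => p i :=
  (continuous_apply i).comp Lclm.continuous

lemma isOpen_Sset (ρ : ℝ → ℝ) (hρ : Continuous ρ) : IsOpen (Sset ρ) := by
  apply IsOpen.inter (isOpen_Ioo.preimage (contCoord 0))
  apply IsOpen.inter (isOpen_Ioo.preimage (contCoord 1))
  apply IsOpen.inter (isOpen_lt continuous_const (contCoord 2))
  exact isOpen_lt (contCoord 2) (hρ.comp (contCoord 0))

lemma meas_Sset (ρ : ℝ → ℝ) (hρ : Continuous ρ) : MeasurableSet (Sset ρ) :=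
  (isOpen_Sset ρ hρ).measurableSet

lemma norm_eSph (θ φ : ℝ) : ‖eSph θ φ‖ = 1 := by
  rw [EuclideanSpace.norm_eq]
  rw [show ∑ i, ‖eSph θ φ i‖ ^ 2 = 1 by
    simp [eSph, V3, Fin.sum_univ_three]
    linear_combination (Real.sin θ)^2 * sin_sq_add_cos_sq φ + sin_sq_add_cos_sq θ]
  exact Real.sqrt_one

lemma injOn_Fc (ρ : ℝ → ℝ) : InjOn Fc (Sset ρ) := by
  rintro p ⟨ha, hb, hz⟩ p' ⟨ha', hb', hz'⟩ hp
  have h0 : Real.cos (p 1) * Real.sin (p 0) * p 2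
      = Real.cos (p' 1) * Real.sin (p' 0) * p' 2 := by
    have := congrArg (fun x : E3 => x 0) hp
    simpa [(Fc_coord p).1, (Fc_coord p').1] using this
  have h1 : Real.sin (p 1) * Real.sin (p 0) * p 2
      = Real.sin (p' 1) * Real.sin (p' 0) * p' 2 := by
    have := congrArg (fun x : E3 => x 1) hp
    simpa [(Fc_coord p).2.1, (Fc_coord p').2.1] using this
  have h2 : Real.cos (p 0) * p 2 = Real.cos (p' 0) * p' 2 := by
    have := congrArg (fun x : E3 => x 2) hp
    simpa [(Fc_coord p).2.2, (Fc_coord p').2.2] using this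
  have hzz : p 2 = p' 2 := by
    have hn := congrArg norm hp
    rw [Fc_eq_smul, Fc_eq_smul, norm_smul, norm_smul, norm_eSph, norm_eSph,
      mul_one, mul_one, Real.norm_eq_abs, Real.norm_eq_abs] at hn
    rwa [abs_of_pos hz.1, abs_of_pos hz'.1] at hn
  have hz0 : p 2 ≠ 0 := ne_of_gt hz.1
  have haa : p 0 = p' 0 := by
    apply injOn_cos (Ioo_subset_Icc_self ha) (Ioo_subset_Icc_self ha')
    have := h2; rw [hzz] at this
    exact mul_right_cancel₀ (hzz ▸ hz0) this
  have hsin : Real.sin (p 0) ≠ 0 := ne_of_gt (Real.sin_pos_of_pos_of_lt_pi ha.1 ha.2)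
  have hz0' : p' 2 ≠ 0 := hzz ▸ hz0
  have hsin' : Real.sin (p' 0) ≠ 0 := haa ▸ hsin
  have hcb : Real.cos (p 1) = Real.cos (p' 1) := by
    rw [haa, hzz] at h0
    exact mul_right_cancel₀ hsin' (mul_right_cancel₀ hz0' h0)
  have hsb : Real.sin (p 1) = Real.sin (p' 1) := by
    rw [haa, hzz] at h1
    exact mul_right_cancel₀ hsin' (mul_right_cancel₀ hz0' h1)
  have hbb : p 1 = p' 1 := by
    have hc1 : Real.cos (p 1 - p' 1) = 1 := by
      rw [Real.cos_sub, hcb, hsb]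
      linear_combination sin_sq_add_cos_sq (p' 1)
    have := (Real.cos_eq_one_iff_of_lt_of_lt (by linarith [hb.1, hb.2, hb'.1, hb'.2])
      (by linarith [hb.1, hb.2, hb'.1, hb'.2])).1 hc1
    linarith
  ext i
  fin_cases i
  · exact haa
  · exact hbb
  · exact hzz

def Psi : E3 ≃ᵐ ℝ × (ℝ × ℝ) :=
  (MeasurableEquiv.toLp 2 (Fin 3 → ℝ)).symm.trans
    ((MeasurableEquiv.piFinSuccAbove (fun _ : Fin 3 => ℝ) 0).trans
      ((MeasurableEquiv.refl ℝ).prodCongr MeasurableEquiv.finTwoArrow))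

lemma Psi_apply (p : E3) : Psi p = (p 0, (p 1, p 2)) := rfl

lemma measPres_Psi : MeasurePreserving Psi volume volume := by
  have h1 : MeasurePreserving (MeasurableEquiv.toLp 2 (Fin 3 → ℝ)).symm volume volume :=
    EuclideanSpace.volume_preserving_symm_measurableEquiv_toLp (Fin 3)
  have h2 : MeasurePreserving (MeasurableEquiv.piFinSuccAbove (fun _ : Fin 3 => ℝ) 0)
      volume volume := measurePreserving_piFinSuccAbove (fun _ : Fin 3 => volume) 0
  have h3 : MeasurePreserving
      ((MeasurableEquiv.refl ℝ).prodCongr MeasurableEquiv.finTwoArrow) volume volume :=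
    (MeasurePreserving.id volume).prod (volume_preserving_finTwoArrow ℝ)
  exact (h3.comp h2).comp h1

lemma null_coord (i : Fin 3) (c : ℝ) : volume {p : E3 | p i = c} = 0 := by
  have h1 : MeasurePreserving (MeasurableEquiv.toLp 2 (Fin 3 → ℝ)).symm volume volume :=
    EuclideanSpace.volume_preserving_symm_measurableEquiv_toLp (Fin 3)
  have hs : {p : E3 | p i = c}
      = (MeasurableEquiv.toLp 2 (Fin 3 → ℝ)).symm ⁻¹' {f : Fin 3 → ℝ | f i = c} := rfl
  rw [hs, h1.measure_preimage]
  · rw [volume_pi]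
    exact Measure.pi_hyperplane (fun _ : Fin 3 => (volume : Measure ℝ)) i c
  · exact (measurableSet_eq_fun (measurable_pi_apply i) measurable_const).nullMeasurableSet

lemma null_graph (g : ℝ → ℝ) (hg : Measurable g) : volume {p : E3 | p 2 = g (p 0)} = 0 := by
  have hAm : MeasurableSet {x : ℝ × ℝ × ℝ | x.2.2 = g x.1} :=
    measurableSet_eq_fun (measurable_snd.comp measurable_snd) (hg.comp measurable_fst)
  have hs : {p : E3 | p 2 = g (p 0)} = Psi ⁻¹' {x : ℝ × ℝ × ℝ | x.2.2 = g x.1} := by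
    ext p; simp [Psi_apply]
  rw [hs, measPres_Psi.measure_preimage hAm.nullMeasurableSet]
  rw [Measure.volume_eq_prod, Measure.prod_apply hAm]
  have : ∀ a : ℝ, (volume : Measure (ℝ × ℝ))
      (Prod.mk a ⁻¹' {x : ℝ × ℝ × ℝ | x.2.2 = g x.1}) = 0 := by
    intro a
    have : Prod.mk a ⁻¹' {x : ℝ × ℝ × ℝ | x.2.2 = g x.1} = (univ : Set ℝ) ×ˢ {g a} := by
      ext y
      constructor
      · intro h; exact ⟨mem_univ _, h⟩
      · intro h; exact h.2
    rw [this, Measure.volume_eq_prod, Measure.prod_prod]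
    simp
  exact (lintegral_congr this).trans lintegral_zero

lemma null_TS (ρ : ℝ → ℝ) (hρ : Continuous ρ) : volume (Tset ρ \ Sset ρ) = 0 := by
  have hsub : Tset ρ \ Sset ρ ⊆
      {p : E3 | p 0 = 0} ∪ {p : E3 | p 0 = π} ∪ {p : E3 | p 1 = 0} ∪ {p : E3 | p 1 = 2*π}
        ∪ {p : E3 | p 2 = 0} ∪ {p : E3 | p 2 = ρ (p 0)} := by
    rintro p ⟨⟨⟨ha1, ha2⟩, ⟨hb1, hb2⟩, hz1, hz2⟩, hns⟩
    simp only [mem_union, mem_setOf_eq]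
    by_contra hcon
    push_neg at hcon
    obtain ⟨⟨⟨⟨⟨h1, h2⟩, h3⟩, h4⟩, h5⟩, h6⟩ := hcon
    exact hns ⟨⟨lt_of_le_of_ne ha1 (Ne.symm h1), lt_of_le_of_ne ha2 h2⟩,
      ⟨lt_of_le_of_ne hb1 (Ne.symm h3), lt_of_le_of_ne hb2 h4⟩,
      ⟨lt_of_le_of_ne hz1 (Ne.symm h5), lt_of_le_of_ne hz2 h6⟩⟩
  refine measure_mono_null hsub ?_
  refine measure_union_null (measure_union_null (measure_union_null (measure_union_null
    (measure_union_null ?_ ?_) ?_) ?_) ?_) ?_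
  · exact null_coord 0 0
  · exact null_coord 0 π
  · exact null_coord 1 0
  · exact null_coord 1 (2*π)
  · exact null_coord 2 0
  · exact null_graph ρ hρ.measurable

lemma meas_Tset (ρ : ℝ → ℝ) (hρ : Continuous ρ) : MeasurableSet (Tset ρ) := by
  have h1 : IsClosed {p : E3 | p 0 ∈ Icc (0:ℝ) π} := isClosed_Icc.preimage (contCoord 0)
  have h2 : IsClosed {p : E3 | p 1 ∈ Icc (0:ℝ) (2*π)} := isClosed_Icc.preimage (contCoord 1)
  have h3 : IsClosed {p : E3 | (0:ℝ) ≤ p 2} := isClosed_le continuous_const (contCoord 2)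
  have h4 : IsClosed {p : E3 | p 2 ≤ ρ (p 0)} :=
    isClosed_le (contCoord 2) (hρ.comp (contCoord 0))
  have : Tset ρ = {p : E3 | p 0 ∈ Icc (0:ℝ) π} ∩ ({p | p 1 ∈ Icc (0:ℝ) (2*π)}
      ∩ ({p | (0:ℝ) ≤ p 2} ∩ {p | p 2 ≤ ρ (p 0)})) := by
    ext p; simp [Tset, mem_Icc, and_assoc]
  rw [this]
  exact (h1.inter (h2.inter (h3.inter h4))).measurableSet

lemma axiBody_eq (r ρ : ℝ → ℝ) (hagree : ∀ θ ∈ Icc (0:ℝ) π, r θ = ρ θ) :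
    axiBody r = Fc '' Tset ρ := by
  ext x
  constructor
  · rintro ⟨θ, hθ, φ, hφ, z, hz0, hzr, rfl⟩
    refine ⟨V3 θ φ z, ⟨hθ, hφ, hz0, ?_⟩, ?_⟩
    · show z ≤ ρ θ
      rw [← hagree θ hθ]; exact hzr
    · rw [Fc_eq_smul]; rfl
  · rintro ⟨p, ⟨hθ, hφ, hz⟩, rfl⟩
    exact ⟨p 0, hθ, p 1, hφ, p 2, hz.1, (hagree _ hθ) ▸ hz.2, Fc_eq_smul p⟩

lemma image_TS_null (ρ : ℝ → ℝ) (hρ : Continuous ρ) : volume (Fc '' (Tset ρ \ Sset ρ)) = 0 := by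
  have hm : MeasurableSet (Tset ρ \ Sset ρ) :=
    (meas_Tset ρ hρ).diff (meas_Sset ρ hρ)
  refine le_antisymm ?_ zero_le
  calc volume (Fc '' (Tset ρ \ Sset ρ))
      ≤ ∫⁻ x in Tset ρ \ Sset ρ, ENNReal.ofReal |(Amap x).det| ∂volume :=
        addHaar_image_le_lintegral_abs_det_fderiv volume hm
          (fun x _ => (hasFDerivAt_Fc x).hasFDerivWithinAt)
    _ = 0 := by
        rw [setLIntegral_measure_zero _ _ (null_TS ρ hρ)]

lemma body_ae_eq (ρ : ℝ → ℝ) (hρ : Continuous ρ) :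
    (Fc '' Tset ρ : Set E3) =ᵐ[volume] (Fc '' Sset ρ : Set E3) := by
  have hsub : Sset ρ ⊆ Tset ρ := fun p hp =>
    ⟨⟨hp.1.1.le, hp.1.2.le⟩, ⟨hp.2.1.1.le, hp.2.1.2.le⟩, hp.2.2.1.le, hp.2.2.2.le⟩
  have hT : Fc '' Tset ρ = Fc '' Sset ρ ∪ Fc '' (Tset ρ \ Sset ρ) := by
    rw [← image_union, union_diff_cancel hsub]
  rw [hT]
  have h0 := image_TS_null ρ hρ
  refine (ae_eq_set.2 ⟨?_, ?_⟩)
  · exact measure_mono_null (fun x hx => hx.1.resolve_left hx.2) h0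
  · exact measure_mono_null (fun x hx => absurd (Or.inl hx.1) hx.2) h0

lemma cov (r ρ : ℝ → ℝ) (hρ : Continuous ρ) (hagree : ∀ θ ∈ Icc (0:ℝ) π, r θ = ρ θ)
    (g : E3 → E3) :
    ∫ y in axiBody r, g y
      = ∫ p in Sset ρ, |(Amap p).det| • g (Fc p) := by
  rw [axiBody_eq r ρ hagree, setIntegral_congr_set (body_ae_eq ρ hρ)]
  exact integral_image_eq_integral_abs_det_fderiv_smul volume (meas_Sset ρ hρ)
    (fun x _ => (hasFDerivAt_Fc x).hasFDerivWithinAt) (injOn_Fc ρ) g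

lemma inner_eSph (θ φ : ℝ) (v : E3) :
    ⟪eSph θ φ, v⟫ = Real.cos φ * Real.sin θ * v 0 + Real.sin φ * Real.sin θ * v 1
      + Real.cos θ * v 2 := by
  simp [eSph, V3, PiLp.inner_apply, Fin.sum_univ_three, RCLike.inner_apply, conj_trivial]
  ring

lemma inner_e3 (v : E3) : ⟪e3, v⟫ = v 2 := by
  simp [e3, V3, PiLp.inner_apply, Fin.sum_univ_three, RCLike.inner_apply, conj_trivial]

lemma integrand_eq (ρ : ℝ → ℝ) (p : E3) (hp : p ∈ Sset ρ) :
    |(Amap p).det| • oseen (0 - Fc p) e3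
      = ((8*π)⁻¹ * (p 2 * Real.sin (p 0))) • (e3 + Real.cos (p 0) • eSph (p 0) (p 1)) := by
  have hz : 0 < p 2 := hp.2.2.1
  have hs : 0 < Real.sin (p 0) := Real.sin_pos_of_pos_of_lt_pi hp.1.1 hp.1.2
  have hnorm : ‖(0:E3) - p 2 • eSph (p 0) (p 1)‖ = p 2 := by
    rw [zero_sub, norm_neg, norm_smul, norm_eSph, mul_one, Real.norm_eq_abs, abs_of_pos hz]
  have hinner : ⟪(0:E3) - p 2 • eSph (p 0) (p 1), e3⟫ = -(p 2 * Real.cos (p 0)) := by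
    rw [zero_sub, inner_neg_left, real_inner_smul_left, inner_eSph]
    have h0 : e3 0 = 0 := rfl
    have h1 : e3 1 = 0 := rfl
    have h2 : e3 2 = 1 := rfl
    rw [h0, h1, h2]; ring
  rw [det_Amap, abs_of_nonneg (by positivity), Fc_eq_smul, oseen, hnorm, hinner]
  rw [zero_sub]
  match_scalars
  · field_simp
  · field_simp

def wfun (p : E3) : E3 :=
  ((8*π)⁻¹ * (p 2 * Real.sin (p 0))) • (e3 + Real.cos (p 0) • eSph (p 0) (p 1))

lemma cont_eSph : Continuous fun p : E3 => eSph (p 0) (p 1) := by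
  have h : Continuous fun p : E3 =>
      (![Real.cos (p 1) * Real.sin (p 0), Real.sin (p 1) * Real.sin (p 0),
        Real.cos (p 0)] : Fin 3 → ℝ) := by
    apply continuous_pi
    intro i
    fin_cases i
    · exact (Real.continuous_cos.comp (contCoord 1)).mul
        (Real.continuous_sin.comp (contCoord 0))
    · exact (Real.continuous_sin.comp (contCoord 1)).mul
        (Real.continuous_sin.comp (contCoord 0))
    · exact Real.continuous_cos.comp (contCoord 0)
  exact Lclm.symm.continuous.comp h

lemma cont_wfun : Continuous wfun := by
  refine Continuous.smul (f := fun p : E3 => (8*π)⁻¹ * (p 2 * Real.sin (p 0)))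
    (g := fun p : E3 => e3 + Real.cos (p 0) • eSph (p 0) (p 1)) ?_ ?_
  · exact continuous_const.mul ((contCoord 2).mul
      (Real.continuous_sin.comp (contCoord 0)))
  · exact continuous_const.add
      (((Real.continuous_cos.comp (contCoord 0))).smul cont_eSph)

lemma isCompact_K (M : ℝ) :
    IsCompact {p : E3 | p 0 ∈ Icc (0:ℝ) π ∧ p 1 ∈ Icc (0:ℝ) (2*π) ∧ p 2 ∈ Icc (0:ℝ) M} := by
  have h : IsCompact (Set.pi univ fun i : Fin 3 =>
      Icc ((![0,0,0] : Fin 3 → ℝ) i) ((![π, 2*π, M] : Fin 3 → ℝ) i)) :=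
    isCompact_univ_pi fun i => isCompact_Icc
  have himg := h.image Lclm.symm.continuous
  have : {p : E3 | p 0 ∈ Icc (0:ℝ) π ∧ p 1 ∈ Icc (0:ℝ) (2*π) ∧ p 2 ∈ Icc (0:ℝ) M}
      = Lclm.symm '' (Set.pi univ fun i : Fin 3 =>
        Icc ((![0,0,0] : Fin 3 → ℝ) i) ((![π, 2*π, M] : Fin 3 → ℝ) i)) := by
    ext p
    constructor
    · rintro ⟨h0, h1, h2⟩
      refine ⟨Lclm p, fun i _ => ?_, Lclm.symm_apply_apply p⟩
      fin_cases i <;> simpa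
    · rintro ⟨q, hq, rfl⟩
      exact ⟨(by simpa using hq 0 (mem_univ _) : q 0 ∈ Icc (0:ℝ) π),
        (by simpa using hq 1 (mem_univ _) : q 1 ∈ Icc (0:ℝ) (2*π)),
        (by simpa using hq 2 (mem_univ _) : q 2 ∈ Icc (0:ℝ) M)⟩
  rw [this]
  exact himg

lemma integrableOn_wfun (ρ : ℝ → ℝ) (hρ : Continuous ρ) :
    IntegrableOn wfun (Sset ρ) volume := by
  obtain ⟨M, hM⟩ := (isCompact_Icc.image hρ).bddAbove
  have hsub : Sset ρ ⊆ {p : E3 | p 0 ∈ Icc (0:ℝ) π ∧ p 1 ∈ Icc (0:ℝ) (2*π)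
      ∧ p 2 ∈ Icc (0:ℝ) M} := by
    rintro p ⟨ha, hb, hz⟩
    refine ⟨⟨ha.1.le, ha.2.le⟩, ⟨hb.1.le, hb.2.le⟩, hz.1.le, ?_⟩
    exact le_trans hz.2.le (hM ⟨p 0, ⟨ha.1.le, ha.2.le⟩, rfl⟩)
  exact (cont_wfun.continuousOn.integrableOn_compact (isCompact_K M)).mono_set hsub

lemma vec_eq (r ρ : ℝ → ℝ) (hρ : Continuous ρ) (hagree : ∀ θ ∈ Icc (0:ℝ) π, r θ = ρ θ) :
    ∫ y in axiBody r, oseen (0 - y) e3 = ∫ p in Sset ρ, wfun p := by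
  rw [cov r ρ hρ hagree]
  exact setIntegral_congr_fun (meas_Sset ρ hρ) (fun p hp => integrand_eq ρ p hp)

lemma inner_exchange (ρ : ℝ → ℝ) (hρ : Continuous ρ) (v : E3) :
    ⟪∫ p in Sset ρ, wfun p, v⟫ = ∫ p in Sset ρ, ⟪wfun p, v⟫ := by
  rw [real_inner_comm, ← integral_inner (integrableOn_wfun ρ hρ) v]
  exact integral_congr_ae (Filter.Eventually.of_forall fun p => real_inner_comm _ _)

lemma fubini_Sset (ρ : ℝ → ℝ) (hρ : Continuous ρ) (hρ0 : ∀ x, 0 < ρ x)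
    (H : ℝ → ℝ → ℝ → ℝ) (hH : Continuous fun x : ℝ × ℝ × ℝ => H x.1 x.2.1 x.2.2) :
    ∫ p in Sset ρ, H (p 0) (p 1) (p 2)
      = ∫ a in (0:ℝ)..π, ∫ b in (0:ℝ)..(2*π), ∫ c in (0:ℝ)..(ρ a), H a b c := by
  have hS''o : IsOpen {x : ℝ × ℝ × ℝ | x.1 ∈ Ioo (0:ℝ) π ∧ x.2.1 ∈ Ioo (0:ℝ) (2*π)
      ∧ x.2.2 ∈ Ioo (0:ℝ) (ρ x.1)} := by
    apply IsOpen.inter (isOpen_Ioo.preimage continuous_fst)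
    apply IsOpen.inter (isOpen_Ioo.preimage (continuous_fst.comp continuous_snd))
    apply IsOpen.inter (isOpen_lt continuous_const (continuous_snd.comp continuous_snd))
    exact isOpen_lt (continuous_snd.comp continuous_snd) (hρ.comp continuous_fst)
  set S'' : Set (ℝ × ℝ × ℝ) := {x | x.1 ∈ Ioo (0:ℝ) π ∧ x.2.1 ∈ Ioo (0:ℝ) (2*π)
      ∧ x.2.2 ∈ Ioo (0:ℝ) (ρ x.1)} with hS''def
  have hS''m : MeasurableSet S'' := hS''o.measurableSet
  have hc : ∀ y : ℝ × ℝ × ℝ, (Psi.symm y) 0 = y.1 ∧ (Psi.symm y) 1 = y.2.1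
      ∧ (Psi.symm y) 2 = y.2.2 := by
    intro y
    have h := Psi_apply (Psi.symm y)
    rw [MeasurableEquiv.apply_symm_apply] at h
    exact ⟨(congrArg Prod.fst h).symm, (congrArg (fun z : ℝ × ℝ × ℝ => z.2.1) h).symm,
      (congrArg (fun z : ℝ × ℝ × ℝ => z.2.2) h).symm⟩
  have key : ∀ y : ℝ × ℝ × ℝ,
      (Sset ρ).indicator (fun p => H (p 0) (p 1) (p 2)) (Psi.symm y)
        = S''.indicator (fun x => H x.1 x.2.1 x.2.2) y := by
    intro y
    obtain ⟨h0, h1, h2⟩ := hc y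
    by_cases hy : y ∈ S''
    · rw [indicator_of_mem hy, indicator_of_mem (by exact ⟨h0 ▸ hy.1, h1 ▸ hy.2.1,
        h2 ▸ h0 ▸ hy.2.2⟩), h0, h1, h2]
    · rw [indicator_of_notMem hy, indicator_of_notMem]
      intro hmem
      exact hy ⟨h0 ▸ hmem.1, h1 ▸ hmem.2.1, h0 ▸ h2 ▸ hmem.2.2⟩
  -- transfer to ℝ × ℝ × ℝ
  rw [← integral_indicator (meas_Sset ρ hρ)]
  have step1 : ∫ p : E3, (Sset ρ).indicator (fun p => H (p 0) (p 1) (p 2)) p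
      = ∫ y : ℝ × ℝ × ℝ, S''.indicator (fun x => H x.1 x.2.1 x.2.2) y := by
    calc ∫ p : E3, (Sset ρ).indicator (fun p => H (p 0) (p 1) (p 2)) p
        = ∫ p : E3, (Sset ρ).indicator (fun p => H (p 0) (p 1) (p 2)) (Psi.symm (Psi p)) := by
          simp_rw [MeasurableEquiv.symm_apply_apply]
      _ = ∫ y : ℝ × ℝ × ℝ, (Sset ρ).indicator (fun p => H (p 0) (p 1) (p 2)) (Psi.symm y) :=
          measPres_Psi.integral_comp Psi.measurableEmbedding
            (fun y => (Sset ρ).indicator (fun p => H (p 0) (p 1) (p 2)) (Psi.symm y))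
      _ = ∫ y : ℝ × ℝ × ℝ, S''.indicator (fun x => H x.1 x.2.1 x.2.2) y :=
          integral_congr_ae (Filter.Eventually.of_forall key)
  rw [step1]
  -- integrability
  obtain ⟨M, hM⟩ := (isCompact_Icc.image hρ).bddAbove
  have hsub : S'' ⊆ Icc (0:ℝ) π ×ˢ (Icc (0:ℝ) (2*π) ×ˢ Icc (0:ℝ) M) := by
    rintro x ⟨hx1, hx2, hx3⟩
    exact ⟨⟨hx1.1.le, hx1.2.le⟩, ⟨hx2.1.le, hx2.2.le⟩, hx3.1.le,
      hx3.2.le.trans (hM ⟨x.1, ⟨hx1.1.le, hx1.2.le⟩, rfl⟩)⟩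
  have hIntOn : IntegrableOn (fun x : ℝ × ℝ × ℝ => H x.1 x.2.1 x.2.2) S'' volume :=
    (hH.continuousOn.integrableOn_compact
      (isCompact_Icc.prod (isCompact_Icc.prod isCompact_Icc))).mono_set hsub
  have hInt : Integrable (S''.indicator fun x : ℝ × ℝ × ℝ => H x.1 x.2.1 x.2.2) volume :=
    (integrable_indicator_iff hS''m).2 hIntOn
  rw [Measure.volume_eq_prod] at hInt ⊢
  rw [integral_prod _ hInt]
  -- inner integrals
  have inner_eq : ∀ a : ℝ, (∫ q : ℝ × ℝ, S''.indicator (fun x => H x.1 x.2.1 x.2.2) (a, q))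
      = (Ioo (0:ℝ) π).indicator
          (fun a => ∫ b in (0:ℝ)..(2*π), ∫ c in (0:ℝ)..(ρ a), H a b c) a := by
    intro a
    by_cases haa : a ∈ Ioo (0:ℝ) π
    · rw [indicator_of_mem haa]
      have heq : (fun q : ℝ × ℝ => S''.indicator (fun x => H x.1 x.2.1 x.2.2) (a, q))
          = (Ioo (0:ℝ) (2*π) ×ˢ Ioo (0:ℝ) (ρ a)).indicator (fun q => H a q.1 q.2) := by
        funext q
        by_cases hq : q ∈ Ioo (0:ℝ) (2*π) ×ˢ Ioo (0:ℝ) (ρ a)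
        · rw [indicator_of_mem hq, indicator_of_mem (by exact ⟨haa, hq.1, hq.2⟩)]
        · rw [indicator_of_notMem hq,
            indicator_of_notMem (fun hmem => hq ⟨hmem.2.1, hmem.2.2⟩)]
      rw [heq, integral_indicator (measurableSet_Ioo.prod measurableSet_Ioo)]
      have hIntq : IntegrableOn (fun q : ℝ × ℝ => H a q.1 q.2)
          (Ioo (0:ℝ) (2*π) ×ˢ Ioo (0:ℝ) (ρ a)) (volume.prod volume) := by
        rw [← Measure.volume_eq_prod]
        exact (((hH.comp (Continuous.prodMk_right a)).continuousOn.integrableOn_compact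
          (isCompact_Icc.prod isCompact_Icc)).mono_set
            (prod_mono Ioo_subset_Icc_self Ioo_subset_Icc_self))
      rw [Measure.volume_eq_prod, setIntegral_prod _ hIntq]
      rw [intervalIntegral.integral_of_le (by positivity : (0:ℝ) ≤ 2*π),
        integral_Ioc_eq_integral_Ioo]
      refine setIntegral_congr_fun measurableSet_Ioo (fun b _ => ?_)
      rw [intervalIntegral.integral_of_le (hρ0 a).le, integral_Ioc_eq_integral_Ioo]
    · rw [indicator_of_notMem haa]
      have heq : (fun q : ℝ × ℝ => S''.indicator (fun x => H x.1 x.2.1 x.2.2) (a, q))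
          = fun _ => 0 :=
        funext fun q => indicator_of_notMem (fun hmem => haa hmem.1) _
      rw [heq, integral_zero]
  rw [integral_congr_ae (Filter.Eventually.of_forall inner_eq),
    integral_indicator measurableSet_Ioo,
    intervalIntegral.integral_of_le Real.pi_pos.le, integral_Ioc_eq_integral_Ioo]

lemma scalar_eq (ρ : ℝ → ℝ) (hρ : Continuous ρ) (hρ0 : ∀ x, 0 < ρ x) (v : E3) :
    ∫ p in Sset ρ, ⟪wfun p, v⟫
      = v 2 * ((8:ℝ)⁻¹ * ∫ θ in (0:ℝ)..π,
          ρ θ ^ 2 * Real.sin θ * (1 + Real.cos θ ^ 2)) := by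
  set K : ℝ → ℝ → ℝ := fun a b => (8*π)⁻¹ * Real.sin a * (v 2 + Real.cos a *
    (Real.cos b * Real.sin a * v 0 + Real.sin b * Real.sin a * v 1 + Real.cos a * v 2))
    with hK
  set H : ℝ → ℝ → ℝ → ℝ := fun a b c => c * K a b with hH
  have hpoint : ∀ p : E3, ⟪wfun p, v⟫ = H (p 0) (p 1) (p 2) := by
    intro p
    simp only [wfun, real_inner_smul_left, inner_add_left, inner_e3, inner_eSph, hH, hK]
    ring
  have hHcont : Continuous fun x : ℝ × ℝ × ℝ => H x.1 x.2.1 x.2.2 := by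
    simp only [hH, hK]
    fun_prop
  rw [setIntegral_congr_fun (meas_Sset ρ hρ) (fun p _ => hpoint p),
    fubini_Sset ρ hρ hρ0 H hHcont]
  have h1 : ∀ a b : ℝ, ∫ c in (0:ℝ)..(ρ a), H a b c = ρ a ^ 2 / 2 * K a b := by
    intro a b
    simp only [hH]
    rw [intervalIntegral.integral_mul_const, integral_id]
    ring
  have h2 : ∀ a : ℝ, (∫ b in (0:ℝ)..(2*π), ρ a ^ 2 / 2 * K a b)
      = v 2 * (8:ℝ)⁻¹ * (ρ a ^ 2 * Real.sin a * (1 + Real.cos a ^ 2)) := by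
    intro a
    have hdec : ∀ b : ℝ, ρ a ^ 2 / 2 * K a b
        = (ρ a ^ 2 / 2 * ((8*π)⁻¹ * Real.sin a) * (v 2 + Real.cos a ^ 2 * v 2))
          + (ρ a ^ 2 / 2 * ((8*π)⁻¹ * Real.sin a) * (Real.cos a * Real.sin a * v 0))
              * Real.cos b
          + (ρ a ^ 2 / 2 * ((8*π)⁻¹ * Real.sin a) * (Real.cos a * Real.sin a * v 1))
              * Real.sin b := by
      intro b; simp only [hK]; ring
    rw [intervalIntegral.integral_congr (fun b _ => hdec b)]
    rw [intervalIntegral.integral_add (intervalIntegrable_const.add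
        ((continuous_const.fun_mul Real.continuous_cos).intervalIntegrable _ _))
        ((continuous_const.fun_mul Real.continuous_sin).intervalIntegrable _ _),
      intervalIntegral.integral_add intervalIntegrable_const
        ((continuous_const.fun_mul Real.continuous_cos).intervalIntegrable _ _),
      intervalIntegral.integral_const, intervalIntegral.integral_const_mul,
      intervalIntegral.integral_const_mul, integral_cos, integral_sin]
    simp only [Real.sin_two_pi, Real.cos_two_pi, Real.sin_zero, Real.cos_zero]
    have hπ : (π:ℝ) ≠ 0 := Real.pi_ne_zero
    field_simp
    linear_combination (2 * π * ρ a ^ 2 * Real.sin a * v 2 * (Real.cos a ^ 2 + 1)) *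
      mul_inv_cancel₀ hπ
  have hba : ∀ a : ℝ, (∫ b in (0:ℝ)..(2*π), ∫ c in (0:ℝ)..(ρ a), H a b c)
      = v 2 * (8:ℝ)⁻¹ * (ρ a ^ 2 * Real.sin a * (1 + Real.cos a ^ 2)) := by
    intro a
    rw [intervalIntegral.integral_congr (fun b _ => h1 a b), h2 a]
  rw [intervalIntegral.integral_congr (fun a _ => hba a),
    intervalIntegral.integral_const_mul]
  ring

theorem velocity_at_center_of_axisymmetric_droplet (r : ℝ → ℝ) (K : NNReal)
    (hLip : LipschitzOnWith K r (Set.Icc 0 π))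
    (hpos : ∀ θ ∈ Set.Icc (0:ℝ) π, 0 < r θ) :
    ⟪centerVel r, V3 1 0 0⟫ = 0 ∧
    ⟪centerVel r, V3 0 1 0⟫ = 0 ∧
    ⟪centerVel r, e3⟫
      = -(1 / 4) * ∫ θ in (0:ℝ)..π, r θ ^ 2 * Real.sin θ * (1 - Real.sin θ ^ 2 / 2) ∧
    ⟪centerVel r, e3⟫ < 0 := by
  set cl : ℝ → ℝ := fun θ => max 0 (min θ π) with hcl
  have hcmem : ∀ θ, cl θ ∈ Icc (0:ℝ) π :=
    fun θ => ⟨le_max_left _ _, max_le Real.pi_pos.le (min_le_right _ _)⟩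
  set ρ : ℝ → ℝ := fun θ => r (cl θ) with hρdef
  have hccont : Continuous cl := continuous_const.max (continuous_id.min continuous_const)
  have hρcont : Continuous ρ := hLip.continuousOn.comp_continuous hccont hcmem
  have hρ0 : ∀ x, 0 < ρ x := fun x => hpos _ (hcmem x)
  have hagree : ∀ θ ∈ Icc (0:ℝ) π, r θ = ρ θ := by
    intro θ hθ
    simp only [hρdef, hcl]
    rw [min_eq_left hθ.2, max_eq_right hθ.1]
  have key : ∀ v : E3, ⟪centerVel r, v⟫
      = -(v 2 * ((8:ℝ)⁻¹ * ∫ θ in (0:ℝ)..π,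
          ρ θ ^ 2 * Real.sin θ * (1 + Real.cos θ ^ 2))) := by
    intro v
    rw [centerVel, inner_neg_left, vec_eq r ρ hρcont hagree, inner_exchange ρ hρcont v,
      scalar_eq ρ hρcont hρ0 v]
  have hIpos : 0 < ∫ θ in (0:ℝ)..π, ρ θ ^ 2 * Real.sin θ * (1 + Real.cos θ ^ 2) := by
    apply intervalIntegral.intervalIntegral_pos_of_pos_on
    · apply Continuous.intervalIntegrable
      fun_prop
    · intro x hx
      exact mul_pos (mul_pos (pow_pos (hρ0 x) 2)
        (Real.sin_pos_of_pos_of_lt_pi hx.1 hx.2)) (by positivity)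
    · exact Real.pi_pos
  have hint : (∫ θ in (0:ℝ)..π, r θ ^ 2 * Real.sin θ * (1 - Real.sin θ ^ 2 / 2))
      = (1/2) * ∫ θ in (0:ℝ)..π, ρ θ ^ 2 * Real.sin θ * (1 + Real.cos θ ^ 2) := by
    rw [← intervalIntegral.integral_const_mul]
    apply intervalIntegral.integral_congr
    intro θ hθ
    rw [uIcc_of_le Real.pi_pos.le] at hθ
    show r θ ^ 2 * Real.sin θ * (1 - Real.sin θ ^ 2 / 2)
      = 1 / 2 * (ρ θ ^ 2 * Real.sin θ * (1 + Real.cos θ ^ 2))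
    rw [hagree θ hθ]
    linear_combination (-(ρ θ ^ 2 * Real.sin θ)/2) * Real.sin_sq_add_cos_sq θ
  have h200 : (V3 1 0 0) 2 = 0 := rfl
  have h201 : (V3 0 1 0) 2 = 0 := rfl
  have h2e3 : e3 2 = 1 := rfl
  refine ⟨?_, ?_, ?_, ?_⟩
  · rw [key (V3 1 0 0), h200]; ring
  · rw [key (V3 0 1 0), h201]; ring
  · rw [key e3, h2e3, hint]; ring
  · rw [key e3, h2e3]
    have : 0 < (8:ℝ)⁻¹ * ∫ θ in (0:ℝ)..π, ρ θ ^ 2 * Real.sin θ * (1 + Real.cos θ ^ 2) :=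
      mul_pos (by norm_num) hIpos
    linarith
end
end

section
/- For every d ∈ (−1,1), the map g(θ) = d + r̄_d(θ) cos θ is continuous and strictly decreasing on [0,π], with g(0) = 1 and g(π) = −1; hence g is a bijection from [0,π] onto [−1,1], and θ ↦ arccos(g(θ)) is a bijection of [0,π] onto itself. Moreover, at every θ ∈ (0,π), d/dθ ( r̄_d(θ) cos θ ) = −r̄_d(θ)² sin θ / √(1 − d² sin² θ) ≤ 0. -/
/- For d ∈ (−1,1), the map g(θ) = d + r̄_d(θ) cos θ is continuous and strictly decreasing on
   [0,π], g(0) = 1, g(π) = −1, it is a bijection from [0,π] onto [−1,1], θ ↦ arccos(g(θ)) is a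
   bijection of [0,π] onto itself, and d/dθ (r̄_d(θ) cos θ) = −r̄_d(θ)² sin θ / √(1 − d² sin² θ) ≤ 0
   on (0,π). -/

noncomputable section
open MeasureTheory Real Set Filter

/-- `r̄_d(θ) = −d cos θ + √(1 − d² sin² θ)`. -/
def rbar (d θ : ℝ) : ℝ := -d * Real.cos θ + Real.sqrt (1 - d ^ 2 * Real.sin θ ^ 2)

theorem rbar_center_bijection (d : ℝ) (hd : d ∈ Set.Ioo (-1 : ℝ) 1) :
    ContinuousOn (fun θ => d + rbar d θ * Real.cos θ) (Set.Icc 0 π) ∧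
    StrictAntiOn (fun θ => d + rbar d θ * Real.cos θ) (Set.Icc 0 π) ∧
    d + rbar d 0 * Real.cos 0 = 1 ∧
    d + rbar d π * Real.cos π = -1 ∧
    Set.BijOn (fun θ => d + rbar d θ * Real.cos θ) (Set.Icc 0 π) (Set.Icc (-1) 1) ∧
    Set.BijOn (fun θ => Real.arccos (d + rbar d θ * Real.cos θ)) (Set.Icc 0 π) (Set.Icc 0 π) ∧
    (∀ θ ∈ Set.Ioo (0 : ℝ) π,
      HasDerivAt (fun θ' => rbar d θ' * Real.cos θ')
        (-(rbar d θ) ^ 2 * Real.sin θ / Real.sqrt (1 - d ^ 2 * Real.sin θ ^ 2)) θ ∧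
      -(rbar d θ) ^ 2 * Real.sin θ / Real.sqrt (1 - d ^ 2 * Real.sin θ ^ 2) ≤ 0) := by
  obtain ⟨hd1, hd2⟩ := hd
  have hd2' : d ^ 2 < 1 := by nlinarith
  have hpos : ∀ θ : ℝ, 0 < 1 - d ^ 2 * Real.sin θ ^ 2 := fun θ => by
    nlinarith [Real.sin_sq_le_one θ, sq_nonneg d]
  have hSpos : ∀ θ : ℝ, 0 < Real.sqrt (1 - d ^ 2 * Real.sin θ ^ 2) := fun θ =>
    Real.sqrt_pos.2 (hpos θ)
  have hS2 : ∀ θ : ℝ, Real.sqrt (1 - d ^ 2 * Real.sin θ ^ 2) ^ 2 = 1 - d ^ 2 * Real.sin θ ^ 2 :=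
    fun θ => Real.sq_sqrt (hpos θ).le
  have hrpos : ∀ θ : ℝ, 0 < rbar d θ := by
    intro θ
    have h1 := hS2 θ
    have h2 := hSpos θ
    have h3 := Real.sin_sq_add_cos_sq θ
    unfold rbar
    nlinarith [sq_nonneg (Real.sqrt (1 - d ^ 2 * Real.sin θ ^ 2) + d * Real.cos θ),
      sq_nonneg (Real.sqrt (1 - d ^ 2 * Real.sin θ ^ 2) - d * Real.cos θ)]
  -- derivative at every point
  have hderiv : ∀ θ : ℝ, HasDerivAt (fun θ' => rbar d θ' * Real.cos θ')
      (-(rbar d θ) ^ 2 * Real.sin θ / Real.sqrt (1 - d ^ 2 * Real.sin θ ^ 2)) θ := by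
    intro θ
    have hin : HasDerivAt (fun θ' : ℝ => 1 - d ^ 2 * Real.sin θ' ^ 2)
        (0 - d ^ 2 * (2 * Real.sin θ ^ 1 * Real.cos θ)) θ :=
      (hasDerivAt_const θ (1 : ℝ)).sub (((Real.hasDerivAt_sin θ).pow 2).const_mul (d ^ 2))
    have hsq : HasDerivAt (fun θ' : ℝ => Real.sqrt (1 - d ^ 2 * Real.sin θ' ^ 2))
        ((0 - d ^ 2 * (2 * Real.sin θ ^ 1 * Real.cos θ)) /
          (2 * Real.sqrt (1 - d ^ 2 * Real.sin θ ^ 2))) θ :=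
      hin.sqrt (hpos θ).ne'
    have hr : HasDerivAt (fun θ' => rbar d θ')
        (-d * (-Real.sin θ) + (0 - d ^ 2 * (2 * Real.sin θ ^ 1 * Real.cos θ)) /
          (2 * Real.sqrt (1 - d ^ 2 * Real.sin θ ^ 2))) θ := by
      unfold rbar
      exact ((Real.hasDerivAt_cos θ).const_mul (-d)).add hsq
    have := hr.mul (Real.hasDerivAt_cos θ)
    refine this.congr_deriv ?_
    have hSne : Real.sqrt (1 - d ^ 2 * Real.sin θ ^ 2) ≠ 0 := (hSpos θ).ne'
    unfold rbar
    field_simp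
    ring
  have hcont : ContinuousOn (fun θ => d + rbar d θ * Real.cos θ) (Set.Icc 0 π) := by
    apply Continuous.continuousOn
    unfold rbar
    fun_prop
  have hanti : StrictAntiOn (fun θ => d + rbar d θ * Real.cos θ) (Set.Icc 0 π) := by
    apply strictAntiOn_of_deriv_neg (convex_Icc 0 π) hcont
    intro x hx
    rw [interior_Icc] at hx
    have hdx : HasDerivAt (fun θ => d + rbar d θ * Real.cos θ)
        (-(rbar d x) ^ 2 * Real.sin x / Real.sqrt (1 - d ^ 2 * Real.sin x ^ 2)) x :=
      (hderiv x).const_add d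
    rw [hdx.deriv]
    have hsin : 0 < Real.sin x := Real.sin_pos_of_pos_of_lt_pi hx.1 hx.2
    exact div_neg_of_neg_of_pos (by nlinarith [mul_pos (pow_pos (hrpos x) 2) hsin]) (hSpos x)
  have hg0 : d + rbar d 0 * Real.cos 0 = 1 := by
    simp [rbar]
  have hgpi : d + rbar d π * Real.cos π = -1 := by
    simp [rbar]
  have hmem0 : (0 : ℝ) ∈ Set.Icc 0 π := ⟨le_refl 0, Real.pi_pos.le⟩
  have hmempi : π ∈ Set.Icc 0 π := ⟨Real.pi_pos.le, le_refl π⟩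
  have hmaps : Set.MapsTo (fun θ => d + rbar d θ * Real.cos θ) (Set.Icc 0 π)
      (Set.Icc (-1) 1) := by
    intro θ hθ
    constructor
    · rw [← hgpi]; exact hanti.antitoneOn hθ hmempi hθ.2
    · rw [← hg0]; exact hanti.antitoneOn hmem0 hθ hθ.1
  have hsurj : Set.SurjOn (fun θ => d + rbar d θ * Real.cos θ) (Set.Icc 0 π)
      (Set.Icc (-1) 1) := by
    have := intermediate_value_Icc' Real.pi_pos.le hcont
    rw [hg0, hgpi] at this
    exact this
  have hbij : Set.BijOn (fun θ => d + rbar d θ * Real.cos θ) (Set.Icc 0 π)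
      (Set.Icc (-1) 1) := ⟨hmaps, hanti.injOn, hsurj⟩
  have harccos : Set.BijOn Real.arccos (Set.Icc (-1 : ℝ) 1) (Set.Icc 0 π) := by
    refine ⟨fun x hx => ⟨Real.arccos_nonneg x, Real.arccos_le_pi x⟩, ?_, ?_⟩
    · intro x hx y hy h
      rw [← Real.cos_arccos hx.1 hx.2, ← Real.cos_arccos hy.1 hy.2, h]
    · intro y hy
      exact ⟨Real.cos y, ⟨Real.neg_one_le_cos y, Real.cos_le_one y⟩,
        Real.arccos_cos hy.1 hy.2⟩
  refine ⟨hcont, hanti, hg0, hgpi, hbij, harccos.comp hbij, ?_⟩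
  intro θ hθ
  refine ⟨hderiv θ, ?_⟩
  have hsin : 0 < Real.sin θ := Real.sin_pos_of_pos_of_lt_pi hθ.1 hθ.2
  exact (div_neg_of_neg_of_pos (by nlinarith [mul_pos (pow_pos (hrpos θ) 2) hsin]) (hSpos θ)).le
end
end

section
/- Integral identity for the off-center spherical parametrization: For every d ∈ [−1,1], (1/4) ∫₀^π r̄_d(θ)² sin θ (1 − (1/2) sin² θ) dθ = 1/3 − d²/15. Equivalently, the transported-center velocity of the sphere parametrized by r̄_d satisfies ċ₃[r̄_d] := −(1/4) ∫₀^π r̄_d(θ)² sin θ (1 − (1/2) sin² θ) dθ = −4/15 + (d² − 1)/15. -/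
/- Integral identity for the off-center spherical parametrization:
   (1/4) ∫₀^π r̄_d(θ)² sin θ (1 − sin²θ/2) dθ = 1/3 − d²/15, equivalently the transported-center
   velocity of the sphere parametrized by r̄_d is ċ₃[r̄_d] = −4/15 + (d² − 1)/15. -/

noncomputable section
open MeasureTheory Real Set Filter

theorem rbar_center_velocity_integral (d : ℝ) (hd : d ∈ Set.Icc (-1 : ℝ) 1) :
    (1 / 4) * (∫ θ in (0:ℝ)..π, rbar d θ ^ 2 * Real.sin θ * (1 - Real.sin θ ^ 2 / 2))
      = 1 / 3 - d ^ 2 / 15 ∧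
    -(1 / 4) * (∫ θ in (0:ℝ)..π, rbar d θ ^ 2 * Real.sin θ * (1 - Real.sin θ ^ 2 / 2))
      = -(4 / 15) + (d ^ 2 - 1) / 15 := by
  obtain ⟨hd1, hd2⟩ := hd
  set A : ℝ → ℝ := fun θ =>
    (1 + d ^ 2 * (Real.cos θ ^ 2 - Real.sin θ ^ 2)) * Real.sin θ * (1 - Real.sin θ ^ 2 / 2)
    with hA
  set g : ℝ → ℝ := fun θ =>
    -2 * d * Real.cos θ * Real.sqrt (1 - d ^ 2 * Real.sin θ ^ 2) * Real.sin θ *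
      (1 - Real.sin θ ^ 2 / 2) with hg
  have hX : ∀ θ : ℝ, 0 ≤ 1 - d ^ 2 * Real.sin θ ^ 2 := by
    intro θ
    nlinarith [Real.sin_sq_le_one θ, sq_nonneg d, sq_nonneg (Real.sin θ)]
  have hsplit : ∀ θ : ℝ,
      rbar d θ ^ 2 * Real.sin θ * (1 - Real.sin θ ^ 2 / 2) = A θ + g θ := by
    intro θ
    have h1 : Real.sqrt (1 - d ^ 2 * Real.sin θ ^ 2) ^ 2 = 1 - d ^ 2 * Real.sin θ ^ 2 :=
      Real.sq_sqrt (hX θ)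
    simp only [rbar, hA, hg]
    linear_combination (Real.sin θ * (1 - Real.sin θ ^ 2 / 2)) * h1
  have hcontA : Continuous A := by fun_prop
  have hcontg : Continuous g := by
    apply Continuous.mul
    apply Continuous.mul
    apply Continuous.mul
    · exact (continuous_const.mul Real.continuous_cos)
    · exact Real.continuous_sqrt.comp (by fun_prop)
    · exact Real.continuous_sin
    · fun_prop
  -- integral of g is zero by symmetry θ ↦ π - θ
  have hgodd : ∀ θ : ℝ, g (π - θ) = -g θ := by
    intro θ
    simp only [hg, Real.cos_pi_sub, Real.sin_pi_sub]
    ring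
  have hintg : (∫ θ in (0:ℝ)..π, g θ) = 0 := by
    have h1 : (∫ θ in (0:ℝ)..π, g (π - θ)) = ∫ θ in (0:ℝ)..π, g θ := by
      have := intervalIntegral.integral_comp_sub_left (a := (0:ℝ)) (b := π) g π
      simpa using this
    have h2 : (∫ θ in (0:ℝ)..π, g (π - θ)) = ∫ θ in (0:ℝ)..π, -g θ := by
      apply intervalIntegral.integral_congr
      intro θ _
      exact hgodd θ
    rw [h2, intervalIntegral.integral_neg] at h1
    linarith
  -- integral of A via explicit antiderivative
  have hintA : (∫ θ in (0:ℝ)..π, A θ) = 4 / 3 - 4 * d ^ 2 / 15 := by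
    set Q : ℝ → ℝ := fun t =>
      -(1 / 2) * ((1 - d ^ 2) * (Real.cos t + Real.cos t ^ 3 / 3) +
        2 * d ^ 2 * (Real.cos t ^ 3 / 3 + Real.cos t ^ 5 / 5)) with hQ
    have hderiv : ∀ θ ∈ Set.uIcc (0:ℝ) π, HasDerivAt Q (A θ) θ := by
      intro θ _
      have hc := Real.hasDerivAt_cos θ
      have h := ((((hc.add ((hc.pow 3).div_const 3)).const_mul (1 - d ^ 2)).add
        ((((hc.pow 3).div_const 3).add ((hc.pow 5).div_const 5)).const_mul
          (2 * d ^ 2))).const_mul (-(1 / 2)))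
      convert h using 1
      · rfl
      · rfl
      · rfl
      have hs : Real.sin θ ^ 2 = 1 - Real.cos θ ^ 2 := Real.sin_sq θ
      simp only [hA]
      rw [hs]
      ring
    rw [intervalIntegral.integral_eq_sub_of_hasDerivAt hderiv
      (hcontA.intervalIntegrable 0 π)]
    simp only [hQ, Real.cos_pi, Real.cos_zero]
    ring
  have hmain : (∫ θ in (0:ℝ)..π, rbar d θ ^ 2 * Real.sin θ * (1 - Real.sin θ ^ 2 / 2))
      = 4 / 3 - 4 * d ^ 2 / 15 := by
    have : (∫ θ in (0:ℝ)..π, rbar d θ ^ 2 * Real.sin θ * (1 - Real.sin θ ^ 2 / 2))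
        = ∫ θ in (0:ℝ)..π, (A θ + g θ) := by
      apply intervalIntegral.integral_congr
      intro θ _
      exact hsplit θ
    rw [this, intervalIntegral.integral_add (hcontA.intervalIntegrable 0 π)
      (hcontg.intervalIntegrable 0 π), hintA, hintg]
    ring
  rw [hmain]
  constructor <;> ring
end
end
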